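/- Let m, k ≥ 1, let μ₁,…,μ_m, ν₁,…,ν_m be integers with μ_j ≤ ν_j for all j, let Π = {y ∈ ℝ^m : μ_j ≤ y_j ≤ ν_j}, Γ = {y ∈ Π : y₁ = μ₁}, and C = ∑_{j=1}^m (μ_j + ν_j). Let Λ : ℝ^k → ℝ^m be a linear map with Λ(ℤ^k) ⊆ ℤ^m such that σ ∘ Λ = σ, where σ denotes the sum of all coordinates on ℝ^k and on ℝ^m respectively. Suppose A, B ⊆ ℝ^k are subsets such that Λ restricts to a bijection from B ∩ ℤ^k onto Π ∩ ℤ^m and to a bijection from A ∩ ℤ^k onto Γ ∩ ℤ^m. Then ∑_{z ∈ B ∩ ℤ^k} t^{σ(z)} = T(∑_{z ∈ A ∩ ℤ^k} t^{σ(z)}); equivalently, (1 − t)·∑_{z ∈ B ∩ ℤ^k} t^{σ(z)} = ∑_{z ∈ A ∩ ℤ^k} t^{σ(z)} − t^{C+1}·∑_{z ∈ A ∩ ℤ^k} t^{−σ(z)} in ℤ[t,t⁻¹]. -/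

import Mathlib

open LaurentPolynomial

/-- The integer lattice `ℤ^k ⊆ ℝ^k`. -/
def lattice (k : ℕ) : Set (Fin k → ℝ) := Set.range (fun (z : Fin k → ℤ) (i : Fin k) => (z i : ℝ))

lemma T_finset_sum {α : Type*} (s : Finset α) (f : α → ℤ) :
    (T (∑ i ∈ s, f i) : LaurentPolynomial ℤ) = ∏ i ∈ s, T (f i) := by
  classical
  induction s using Finset.induction_on with
  | empty => simp
  | insert _ _ h ih => rw [Finset.sum_insert h, Finset.prod_insert h, T_add, ih]

lemma one_sub_T_mul_sum_aux (p : ℤ) (n : ℕ) :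
    ((1 : LaurentPolynomial ℤ) - T 1) * ∑ a ∈ Finset.Icc p (p + n), T a
      = T p - T (p + n + 1) := by
  induction n with
  | zero =>
    rw [Nat.cast_zero, add_zero, Finset.Icc_self, Finset.sum_singleton, T_add]
    ring
  | succ n ih =>
    have hins : Finset.Icc p (p + (n + 1 : ℕ)) = insert (p + n + 1) (Finset.Icc p (p + n)) := by
      ext a; simp only [Finset.mem_Icc, Finset.mem_insert]; push_cast; omega
    rw [hins, Finset.sum_insert (by simp), mul_add, ih,
      show (p + (((n : ℕ) + 1 : ℕ) : ℤ) + 1) = (p + n + 1) + 1 by push_cast; ring,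
      T_add (p + (n : ℤ) + 1) 1]
    ring

lemma one_sub_T_mul_sum (p q : ℤ) (h : p ≤ q) :
    ((1 : LaurentPolynomial ℤ) - T 1) * ∑ a ∈ Finset.Icc p q, T a = T p - T (q + 1) := by
  have h1 : q = p + ((q - p).toNat : ℤ) := by omega
  rw [h1]
  exact one_sub_T_mul_sum_aux p (q - p).toNat

lemma sum_T_neg (p q : ℤ) :
    ∑ a ∈ Finset.Icc p q, (T (-a) : LaurentPolynomial ℤ)
      = T (-(p + q)) * ∑ a ∈ Finset.Icc p q, T a := by
  rw [Finset.mul_sum]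
  refine Finset.sum_nbij' (fun a => p + q - a) (fun a => p + q - a) ?_ ?_ ?_ ?_ ?_ <;>
    simp only [Finset.mem_Icc]
  · intro a ha; omega
  · intro a ha; omega
  · intro a _; ring
  · intro a _; ring
  · intro a _; rw [← T_add]; ring_nf

lemma sum_floor_eq {k m : ℕ} (Λ : (Fin k → ℝ) →ₗ[ℝ] (Fin m → ℝ))
    (hΛint : ∀ z : Fin k → ℤ, ∃ w : Fin m → ℤ,
      Λ (fun i => (z i : ℝ)) = fun j => (w j : ℝ))
    (hΛσ : ∀ x : Fin k → ℝ, ∑ j, Λ x j = ∑ i, x i) (z : Fin k → ℤ) :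
    ∑ j, ⌊Λ (fun i => (z i : ℝ)) j⌋ = ∑ i, z i := by
  obtain ⟨w, hw⟩ := hΛint z
  have h1 : ∀ j, ⌊Λ (fun i => (z i : ℝ)) j⌋ = w j := by
    intro j; rw [hw]; exact Int.floor_intCast _
  have h2 : ((∑ j, w j : ℤ) : ℝ) = ((∑ i, z i : ℤ) : ℝ) := by
    push_cast
    rw [show ∑ j, (w j : ℝ) = ∑ j, Λ (fun i => (z i : ℝ)) j from by rw [hw], hΛσ]
  simp only [h1]
  exact_mod_cast h2

lemma bij_floor {k m : ℕ} (Λ : (Fin k → ℝ) →ₗ[ℝ] (Fin m → ℝ))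
    (hΛint : ∀ z : Fin k → ℤ, ∃ w : Fin m → ℤ,
      Λ (fun i => (z i : ℝ)) = fun j => (w j : ℝ))
    (A : Set (Fin k → ℝ)) (W : Set (Fin m → ℝ))
    (hW : Set.BijOn Λ (A ∩ lattice k) (W ∩ lattice m)) :
    Set.BijOn (fun (z : Fin k → ℤ) (j : Fin m) => ⌊Λ (fun i => (z i : ℝ)) j⌋)
      {z : Fin k → ℤ | (fun i => (z i : ℝ)) ∈ A}
      {w : Fin m → ℤ | (fun j => (w j : ℝ)) ∈ W} := by
  have key : ∀ z : Fin k → ℤ,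
      (fun j => ((⌊Λ (fun i => (z i : ℝ)) j⌋ : ℤ) : ℝ)) = Λ (fun i => (z i : ℝ)) := by
    intro z
    obtain ⟨w, hw⟩ := hΛint z
    funext j; rw [hw]; simp
  refine ⟨?_, ?_, ?_⟩
  · intro z hz
    have h1 : (fun i => (z i : ℝ)) ∈ A ∩ lattice k := ⟨hz, ⟨z, rfl⟩⟩
    have h2 := hW.mapsTo h1
    simpa only [Set.mem_setOf_eq, key z] using h2.1
  · intro z1 h1 z2 h2 heq
    have e1 : Λ (fun i => (z1 i : ℝ)) = Λ (fun i => (z2 i : ℝ)) := by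
      rw [← key z1, ← key z2]
      exact congrArg (fun (w : Fin m → ℤ) (j : Fin m) => ((w j : ℤ) : ℝ)) heq
    have := hW.injOn ⟨h1, ⟨z1, rfl⟩⟩ ⟨h2, ⟨z2, rfl⟩⟩ e1
    funext i
    exact_mod_cast congrFun this i
  · intro w hw
    obtain ⟨x, hx, hΛx⟩ := hW.surjOn ⟨hw, ⟨w, rfl⟩⟩
    obtain ⟨z, rfl⟩ := hx.2
    refine ⟨z, hx.1, ?_⟩
    funext j
    have := congrFun hΛx j
    simp only [this]
    exact Int.floor_intCast _

/-- if `Λ : ℝ^k → ℝ^m` is linear, maps `ℤ^k` into `ℤ^m`, preserves the sum of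
coordinates, and restricts to bijections `B ∩ ℤ^k → Π ∩ ℤ^m` and `A ∩ ℤ^k → Γ ∩ ℤ^m`
(where `Π = {μ ≤ y ≤ ν}`, `Γ = {y ∈ Π : y₁ = μ₁}`), then, with `C = ∑ (μ_j + ν_j)`,
`(1 − t)·∑_{z ∈ B ∩ ℤ^k} t^{σ(z)} = ∑_{z ∈ A ∩ ℤ^k} t^{σ(z)} − t^{C+1}·∑_{z ∈ A ∩ ℤ^k} t^{−σ(z)}`,
i.e. `∑_{B ∩ ℤ^k} t^{σ(z)} = T(∑_{A ∩ ℤ^k} t^{σ(z)})`. -/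
theorem stmt_8 (m k : ℕ) (hm : 1 ≤ m) (hk : 1 ≤ k) (μ ν : Fin m → ℤ)
    (hμν : ∀ j, μ j ≤ ν j)
    (Λ : (Fin k → ℝ) →ₗ[ℝ] (Fin m → ℝ))
    (hΛint : ∀ z : Fin k → ℤ, ∃ w : Fin m → ℤ,
      Λ (fun i => (z i : ℝ)) = fun j => (w j : ℝ))
    (hΛσ : ∀ x : Fin k → ℝ, ∑ j, Λ x j = ∑ i, x i)
    (A B : Set (Fin k → ℝ))
    (hB : Set.BijOn Λ (B ∩ lattice k)
      ({x : Fin m → ℝ | ∀ j, (μ j : ℝ) ≤ x j ∧ x j ≤ ν j} ∩ lattice m))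
    (hA : Set.BijOn Λ (A ∩ lattice k)
      (({x : Fin m → ℝ | ∀ j, (μ j : ℝ) ≤ x j ∧ x j ≤ ν j} ∩
        {x : Fin m → ℝ | x ⟨0, hm⟩ = (μ ⟨0, hm⟩ : ℝ)}) ∩ lattice m)) :
    ((1 : LaurentPolynomial ℤ) - T 1) * (∑ᶠ z ∈ {z : Fin k → ℤ | (fun i => (z i : ℝ)) ∈ B}, T (∑ i, z i)) =
      (∑ᶠ z ∈ {z : Fin k → ℤ | (fun i => (z i : ℝ)) ∈ A}, T (∑ i, z i)) -
        T ((∑ j, (μ j + ν j)) + 1) *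
          (∑ᶠ z ∈ {z : Fin k → ℤ | (fun i => (z i : ℝ)) ∈ A}, T (-∑ i, z i)) := by
  classical
  obtain ⟨m', rfl⟩ : ∃ m', m = m' + 1 := ⟨m - 1, by omega⟩
  have hι0 : (⟨0, hm⟩ : Fin (m' + 1)) = 0 := rfl
  set Λz : (Fin k → ℤ) → (Fin (m' + 1) → ℤ) :=
    fun z j => ⌊Λ (fun i => (z i : ℝ)) j⌋ with hΛzdef
  have hσ : ∀ z, ∑ j, Λz z j = ∑ i, z i := sum_floor_eq Λ hΛint hΛσ
  -- the Γ finset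
  set ΓF : Finset (Fin (m' + 1) → ℤ) :=
    (Finset.Icc μ ν).filter (fun w => w 0 = μ 0) with hΓFdef
  -- transfer the B-sum
  have hBset : {w : Fin (m' + 1) → ℤ |
      (fun j => (w j : ℝ)) ∈ {x : Fin (m' + 1) → ℝ | ∀ j, (μ j : ℝ) ≤ x j ∧ x j ≤ ν j}}
      = ↑(Finset.Icc μ ν) := by
    ext w
    simp only [Set.mem_setOf_eq, Finset.coe_Icc, Set.mem_Icc, Pi.le_def, ← forall_and]
    constructor <;> intro h j <;> have := h j <;>
      exact ⟨by exact_mod_cast this.1, by exact_mod_cast this.2⟩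
  have hBsum : (∑ᶠ z ∈ {z : Fin k → ℤ | (fun i => (z i : ℝ)) ∈ B}, T (∑ i, z i)
      : LaurentPolynomial ℤ) = ∑ w ∈ Finset.Icc μ ν, T (∑ j, w j) := by
    rw [finsum_mem_eq_of_bijOn (g := fun w : Fin (m' + 1) → ℤ => (T (∑ j, w j) :
        LaurentPolynomial ℤ)) Λz (bij_floor Λ hΛint B _ hB)
      (fun z _ => by rw [← hσ z]), hBset, finsum_mem_coe_finset]
  -- transfer the A-sums
  have hAbij := bij_floor Λ hΛint A _ hA
  have hAset : {w : Fin (m' + 1) → ℤ |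
      (fun j => (w j : ℝ)) ∈ ({x : Fin (m' + 1) → ℝ | ∀ j, (μ j : ℝ) ≤ x j ∧ x j ≤ ν j} ∩
        {x : Fin (m' + 1) → ℝ | x ⟨0, hm⟩ = (μ ⟨0, hm⟩ : ℝ)})} = ↑ΓF := by
    ext w
    simp only [Set.mem_setOf_eq, Set.mem_inter_iff, hΓFdef, Finset.coe_filter,
      Finset.mem_Icc, Pi.le_def, hι0]
    constructor
    · rintro ⟨h1, h2⟩
      refine ⟨⟨fun j => ?_, fun j => ?_⟩, ?_⟩
      · exact_mod_cast (h1 j).1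
      · exact_mod_cast (h1 j).2
      · exact_mod_cast h2
    · rintro ⟨⟨h1, h2⟩, h3⟩
      refine ⟨fun j => ⟨?_, ?_⟩, ?_⟩
      · exact_mod_cast h1 j
      · exact_mod_cast h2 j
      · exact_mod_cast h3
  have hAsum : (∑ᶠ z ∈ {z : Fin k → ℤ | (fun i => (z i : ℝ)) ∈ A}, T (∑ i, z i)
      : LaurentPolynomial ℤ) = ∑ w ∈ ΓF, T (∑ j, w j) := by
    rw [finsum_mem_eq_of_bijOn (g := fun w : Fin (m' + 1) → ℤ => (T (∑ j, w j) :
        LaurentPolynomial ℤ)) Λz hAbij (fun z _ => by rw [← hσ z]), hAset,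
      finsum_mem_coe_finset]
  have hAsum' : (∑ᶠ z ∈ {z : Fin k → ℤ | (fun i => (z i : ℝ)) ∈ A}, T (-∑ i, z i)
      : LaurentPolynomial ℤ) = ∑ w ∈ ΓF, T (-∑ j, w j) := by
    rw [finsum_mem_eq_of_bijOn (g := fun w : Fin (m' + 1) → ℤ => (T (-∑ j, w j) :
        LaurentPolynomial ℤ)) Λz hAbij (fun z _ => by rw [← hσ z]), hAset,
      finsum_mem_coe_finset]
  rw [hBsum, hAsum, hAsum']
  -- now a purely combinatorial identity over finsets
  set s : Fin (m' + 1) → Finset ℤ := fun j => Finset.Icc (μ j) (ν j) with hsdef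
  set s' : Fin (m' + 1) → Finset ℤ :=
    fun j => if j = 0 then {μ 0} else Finset.Icc (μ j) (ν j) with hs'def
  have hIcc : Finset.Icc μ ν = Fintype.piFinset s := by
    ext w
    simp only [Finset.mem_Icc, Fintype.mem_piFinset, hsdef, Pi.le_def, ← forall_and]
  have hΓ : ΓF = Fintype.piFinset s' := by
    ext w
    simp only [hΓFdef, Finset.mem_filter, Finset.mem_Icc, Fintype.mem_piFinset, hs'def,
      Pi.le_def]
    constructor
    · rintro ⟨⟨h1, h2⟩, h3⟩ j
      by_cases hj : j = 0
      · subst hj; simp [h3]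
      · simp [hj, Finset.mem_Icc, h1 j, h2 j]
    · intro h
      have h0 : w 0 = μ 0 := by simpa using h 0
      refine ⟨⟨fun j => ?_, fun j => ?_⟩, h0⟩ <;> by_cases hj : j = 0
      · subst hj; omega
      · have := h j; simp only [if_neg hj, Finset.mem_Icc] at this; exact this.1
      · subst hj; have := hμν 0; omega
      · have := h j; simp only [if_neg hj, Finset.mem_Icc] at this; exact this.2
  have e1 : ∑ w ∈ Finset.Icc μ ν, (T (∑ j, w j) : LaurentPolynomial ℤ)
      = ∏ j, ∑ a ∈ s j, (T a : LaurentPolynomial ℤ) := by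
    rw [hIcc, Finset.prod_univ_sum]
    exact Finset.sum_congr rfl fun w _ => T_finset_sum Finset.univ w
  have e2 : ∑ w ∈ ΓF, (T (∑ j, w j) : LaurentPolynomial ℤ)
      = ∏ j, ∑ a ∈ s' j, (T a : LaurentPolynomial ℤ) := by
    rw [hΓ, Finset.prod_univ_sum]
    exact Finset.sum_congr rfl fun w _ => T_finset_sum Finset.univ w
  have e3 : ∑ w ∈ ΓF, (T (-∑ j, w j) : LaurentPolynomial ℤ)
      = ∏ j, ∑ a ∈ s' j, (T (-a) : LaurentPolynomial ℤ) := by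
    rw [hΓ, Finset.prod_univ_sum]
    refine Finset.sum_congr rfl fun w _ => ?_
    rw [← Finset.sum_neg_distrib]
    exact T_finset_sum Finset.univ fun j => -(w j)
  rw [e1, e2, e3]
  -- split off the first coordinate
  set P : LaurentPolynomial ℤ := ∏ i : Fin m', ∑ a ∈ s i.succ, (T a : LaurentPolynomial ℤ)
    with hPdef
  set D : ℤ := ∑ i : Fin m', (μ i.succ + ν i.succ) with hDdef
  have hs'0 : s' 0 = {μ 0} := by simp [hs'def]
  have hs'succ : ∀ i : Fin m', s' i.succ = s i.succ := by
    intro i; simp [hs'def, hsdef, Fin.succ_ne_zero]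
  have f1 : ∏ j, ∑ a ∈ s j, (T a : LaurentPolynomial ℤ) = (∑ a ∈ s 0, (T a :
      LaurentPolynomial ℤ)) * P := Fin.prod_univ_succ _
  have f2 : ∏ j, ∑ a ∈ s' j, (T a : LaurentPolynomial ℤ) = T (μ 0) * P := by
    rw [Fin.prod_univ_succ, hs'0, Finset.sum_singleton]
    simp only [hs'succ]; rfl
  have f3 : ∏ j, ∑ a ∈ s' j, (T (-a) : LaurentPolynomial ℤ) = T (-(μ 0)) * (T (-D) * P) := by
    rw [Fin.prod_univ_succ, hs'0, Finset.sum_singleton]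
    congr 1
    have : ∀ i : Fin m', ∑ a ∈ s' i.succ, (T (-a) : LaurentPolynomial ℤ)
        = T (-(μ i.succ + ν i.succ)) * ∑ a ∈ s i.succ, (T a : LaurentPolynomial ℤ) := by
      intro i; rw [hs'succ, hsdef]; exact sum_T_neg _ _
    rw [Finset.prod_congr rfl fun i _ => this i, Finset.prod_mul_distrib, hPdef, hDdef,
      ← Finset.sum_neg_distrib, T_finset_sum]
  rw [f1, f2, f3]
  have hC : (∑ j, (μ j + ν j)) = (μ 0 + ν 0) + D := by
    rw [hDdef, Fin.sum_univ_succ]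
  rw [hC, hsdef]
  rw [← mul_assoc, one_sub_T_mul_sum (μ 0) (ν 0) (hμν 0)]
  have : (T (μ 0 + ν 0 + D + 1) : LaurentPolynomial ℤ) * (T (-μ 0) * (T (-D) * P))
      = T (ν 0 + 1) * P := by
    rw [← mul_assoc, ← mul_assoc, ← T_add, ← T_add,
      show μ 0 + ν 0 + D + 1 + -μ 0 + -D = ν 0 + 1 by ring]
  rw [this]
  ring
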